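/- There is no finitary strongly complete and sound proof system for HXPath= over the class of tree models: any consequence relation ⊢ that is finitary (Γ ⊢ φ iff some finite Γ' ⊆ Γ has Γ' ⊢ φ), sound (Γ ⊢ φ implies Γ ⊨_tree φ) and strongly complete (Γ ⊨_tree φ implies Γ ⊢ φ) leads to a contradiction. -/

import Mathlib

mutual
inductive PExp (P N M E : Type) : Type
  | mod : M → PExp P N M E
  | at_ : N → PExp P N M E
  | test : NExp P N M E → PExp P N M E
  | comp : PExp P N M E → PExp P N M E → PExp P N M E
inductive NExp (P N M E : Type) : Type
  | prop : P → NExp P N M E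
  | nom : N → NExp P N M E
  | neg : NExp P N M E → NExp P N M E
  | conj : NExp P N M E → NExp P N M E → NExp P N M E
  | cmpEq : E → PExp P N M E → PExp P N M E → NExp P N M E
  | cmpNeq : E → PExp P N M E → PExp P N M E → NExp P N M E
end

/-- An abstract hybrid data model (the requirement that each `sim e` is an
equivalence relation is stated as a separate hypothesis where needed). -/
structure Model (P N M E : Type) where
  W : Type
  sim : E → W → W → Prop
  R : M → W → W → Prop
  V : W → P → Prop
  nom : N → W

mutual
def psat {P N M E : Type} (𝔐 : Model P N M E) : PExp P N M E → 𝔐.W → 𝔐.W → Prop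
  | .mod a, m, n => 𝔐.R a m n
  | .at_ i, _, n => 𝔐.nom i = n
  | .test φ, m, n => m = n ∧ nsat 𝔐 φ m
  | .comp α β, m, n => ∃ l, psat 𝔐 α m l ∧ psat 𝔐 β l n
def nsat {P N M E : Type} (𝔐 : Model P N M E) : NExp P N M E → 𝔐.W → Prop
  | .prop p, m => 𝔐.V m p
  | .nom i, m => 𝔐.nom i = m
  | .neg φ, m => ¬ nsat 𝔐 φ m
  | .conj φ ψ, m => nsat 𝔐 φ m ∧ nsat 𝔐 ψ m
  | .cmpEq e α β, m => ∃ n l, psat 𝔐 α m n ∧ psat 𝔐 β m l ∧ 𝔐.sim e n l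
  | .cmpNeq e α β, m => ∃ n l, psat 𝔐 α m n ∧ psat 𝔐 β m l ∧ ¬ 𝔐.sim e n l
end

variable {P N M E : Type}

/-- `⊤` defined from a given node expression: `¬(φ ∧ ¬φ)`. -/
def NExp.top (φ : NExp P N M E) : NExp P N M E := .neg (.conj φ (.neg φ))
/-- `ε := [⊤]`. -/
def PExp.eps (φ : NExp P N M E) : PExp P N M E := .test (NExp.top φ)
/-- `⟨α⟩φ := ⟨α[φ] =_e α[φ]⟩`. -/
def NExp.dia (e : E) (α : PExp P N M E) (φ : NExp P N M E) : NExp P N M E :=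
  .cmpEq e (α.comp (.test φ)) (α.comp (.test φ))
/-- `[α]φ := ¬⟨α⟩¬φ`. -/
def NExp.box (e : E) (α : PExp P N M E) (φ : NExp P N M E) : NExp P N M E :=
  .neg (NExp.dia e α (.neg φ))
/-- `@_i φ := ⟨@_i⟩φ`. -/
def NExp.atf (e : E) (i : N) (φ : NExp P N M E) : NExp P N M E := NExp.dia e (.at_ i) φ
def NExp.impl (φ ψ : NExp P N M E) : NExp P N M E := .neg (.conj φ (.neg ψ))
def NExp.iffN (φ ψ : NExp P N M E) : NExp P N M E := .conj (φ.impl ψ) (ψ.impl φ)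

/-- A (pointed-free) tree model: mono-modal abstract hybrid data model whose
accessibility relation forms a tree (unique root without predecessors, every node
reachable from the root, unique predecessors, no cycles). -/
def IsTree (𝔐 : Model P N Unit Unit) : Prop :=
  (∀ e, Equivalence (𝔐.sim e)) ∧
  ∃ r : 𝔐.W,
    (∀ x, ¬ 𝔐.R () x r) ∧
    (∀ x, (∀ y, ¬ 𝔐.R () y x) → x = r) ∧
    (∀ n, Relation.ReflTransGen (𝔐.R ()) r n) ∧
    (∀ n l l', 𝔐.R () l n → 𝔐.R () l' n → l = l') ∧
    (∀ n, ¬ Relation.TransGen (𝔐.R ()) n n)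

/-- Local semantic consequence over the class of tree models. -/
def TreeConseq (Γ : Set (NExp ℕ ℕ Unit Unit)) (φ : NExp ℕ ℕ Unit Unit) : Prop :=
  ∀ (𝔐 : Model ℕ ℕ Unit Unit) (m : 𝔐.W), IsTree 𝔐 →
    (∀ ψ ∈ Γ, nsat 𝔐 ψ m) → nsat 𝔐 φ m


/-! ### Auxiliary machinery for the compactness argument -/

/-- `chain R n x y`: there is an `R`-path of length `n` from `x` to `y`. -/
def chain {W : Type} (R : W → W → Prop) : ℕ → W → W → Prop
  | 0 => Eq
  | n+1 => fun x m => ∃ y, chain R n x y ∧ R y m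

lemma reflTransGen_chain {W : Type} {R : W → W → Prop} {r m : W}
    (h : Relation.ReflTransGen R r m) : ∃ k, chain R k r m := by
  induction h with
  | refl => exact ⟨0, rfl⟩
  | tail _ h ih => obtain ⟨k, hk⟩ := ih; exact ⟨k + 1, _, hk, h⟩

/-- In a structure with a root (no predecessors) and unique predecessors, any
path ending at `m` is at most as long as a root path to `m`. -/
lemma chain_le {W : Type} {R : W → W → Prop} {r : W}
    (hroot : ∀ x, ¬ R x r) (huniq : ∀ n l l', R l n → R l' n → l = l') :
    ∀ n x m, chain R n x m → ∀ k, chain R k r m → n ≤ k := by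
  intro n
  induction n with
  | zero => intro _ _ _ _ _; exact Nat.zero_le _
  | succ n ih =>
    rintro x m ⟨y, hy, hym⟩ k hk
    cases k with
    | zero => cases hk; exact absurd hym (hroot y)
    | succ k =>
      obtain ⟨y', hy', hy'm⟩ := hk
      cases huniq m y y' hym hy'm
      exact Nat.succ_le_succ (ih x y hy k hy')

/-- `n`-fold composition of the modality. -/
def modPow : ℕ → PExp ℕ ℕ Unit Unit
  | 0 => PExp.eps (.prop 0)
  | n+1 => .comp (modPow n) (.mod ())

lemma psat_modPow (𝔐 : Model ℕ ℕ Unit Unit) :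
    ∀ n x y, psat 𝔐 (modPow n) x y ↔ chain (𝔐.R ()) n x y := by
  intro n
  induction n with
  | zero =>
    intro x y
    simp only [modPow, PExp.eps, NExp.top, psat, nsat, chain]
    tauto
  | succ n ih =>
    intro x y
    simp only [modPow, psat, chain, ih]

/-- The chain-forcing formula: the point named `n+1` reaches the point named `0`
in exactly `n` steps. -/
def Lin (n : ℕ) : NExp ℕ ℕ Unit Unit :=
  NExp.dia () ((PExp.at_ (n + 1)).comp (modPow n)) (.nom 0)

lemma Lin_inj : Function.Injective Lin := by
  intro a b h
  simp only [Lin, NExp.dia, NExp.cmpEq.injEq, PExp.comp.injEq, PExp.at_.injEq,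
    Nat.add_right_cancel_iff, true_and, and_imp] at h
  tauto

def ΓLin : Set (NExp ℕ ℕ Unit Unit) := insert (NExp.nom 0) (Set.range Lin)

/-- Extracting the chain from satisfaction of `Lin n`. -/
lemma Lin_chain {𝔐 : Model ℕ ℕ Unit Unit} {m : 𝔐.W} (h0 : 𝔐.nom 0 = m)
    {n : ℕ} (h : nsat 𝔐 (Lin n) m) : chain (𝔐.R ()) n (𝔐.nom (n + 1)) m := by
  obtain ⟨a, b, ha, -, -⟩ := h
  obtain ⟨t, ⟨l, hl, ht⟩, -, ht3⟩ := ha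
  cases hl
  rw [psat_modPow] at ht
  have ht3' : 𝔐.nom 0 = t := ht3
  have htm : t = m := ht3'.symm.trans h0
  rwa [htm] at ht

/-- `ΓLin` is unsatisfiable over tree models. -/
lemma ΓLin_unsat : TreeConseq ΓLin (NExp.conj (.prop 0) (.neg (.prop 0))) := by
  intro 𝔐 m htree hsat
  exfalso
  obtain ⟨-, r, hroot, -, hreach, huniq, -⟩ := htree
  have h0 : 𝔐.nom 0 = m := hsat _ (Set.mem_insert _ _)
  obtain ⟨k, hk⟩ := reflTransGen_chain (hreach m)
  have hlin : nsat 𝔐 (Lin (k + 1)) m :=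
    hsat _ (Set.mem_insert_of_mem _ ⟨k + 1, rfl⟩)
  have := chain_le hroot huniq (k + 1) _ m (Lin_chain h0 hlin) k hk
  omega

/-- The successor relation on `ℕ`. -/
def Rsucc : ℕ → ℕ → Prop := fun x y => y = x + 1

/-- The concrete chain model `ℕ` with successor relation, point `d` named `0`. -/
def chainModel (d : ℕ) : Model ℕ ℕ Unit Unit where
  W := ℕ
  sim := fun _ _ _ => True
  R := fun _ => Rsucc
  V := fun _ _ => True
  nom := fun i => match i with
    | 0 => d
    | k + 1 => d - k

lemma Rsucc_root : ∀ x : ℕ, ¬ Rsucc x 0 := by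
  intro x h; exact Nat.succ_ne_zero x h.symm

lemma Rsucc_uniqueRoot : ∀ x : ℕ, (∀ y, ¬ Rsucc y x) → x = 0 := by
  intro x h
  cases x with
  | zero => rfl
  | succ k => exact absurd rfl (h k)

lemma Rsucc_reach : ∀ n : ℕ, Relation.ReflTransGen Rsucc 0 n := by
  intro n
  induction n with
  | zero => exact Relation.ReflTransGen.refl
  | succ n ih => exact ih.tail rfl

lemma Rsucc_uniqPred : ∀ n l l' : ℕ, Rsucc l n → Rsucc l' n → l = l' := by
  intro n l l' h h'
  unfold Rsucc at h h'
  omega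

lemma Rsucc_acyclic : ∀ n : ℕ, ¬ Relation.TransGen Rsucc n n := by
  intro n h
  have : ∀ a b : ℕ, Relation.TransGen Rsucc a b → a < b := by
    intro a b hab
    induction hab with
    | single h => unfold Rsucc at h; omega
    | tail _ h ih => unfold Rsucc at h; omega
  exact absurd (this n n h) (Nat.lt_irrefl n)

lemma chainModel_isTree (d : ℕ) : IsTree (chainModel d) :=
  ⟨fun _ => ⟨fun _ => trivial, fun _ => trivial, fun _ _ => trivial⟩,
    (0 : ℕ), Rsucc_root, Rsucc_uniqueRoot, Rsucc_reach, Rsucc_uniqPred, Rsucc_acyclic⟩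

lemma chain_Rsucc : ∀ n x y : ℕ, chain Rsucc n x y ↔ y = x + n := by
  intro n
  induction n with
  | zero => intro x y; simp [chain, eq_comm]
  | succ n ih =>
    intro x y
    constructor
    · rintro ⟨z, hz, hzy⟩
      rw [ih] at hz
      unfold Rsucc at hzy
      omega
    · intro h
      refine ⟨x + n, (ih x (x + n)).2 rfl, ?_⟩
      show y = (x + n) + 1
      omega

lemma chainModel_chain (d : ℕ) : ∀ n x y : ℕ,
    chain ((chainModel d).R ()) n x y ↔ y = x + n := chain_Rsucc

lemma chainModel_sat_Lin (d n : ℕ) (hn : n ≤ d) :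
    nsat (chainModel d) (Lin n) (((chainModel d).nom 0 : ℕ)) := by
  refine ⟨d, d, ?_, ?_, trivial⟩ <;>
  · refine ⟨d, ⟨d - n, rfl, ?_⟩, rfl, ?_⟩
    · exact (psat_modPow (chainModel d) n (d - n) d).2 ((chainModel_chain d n (d - n) d).2 (by omega))
    · rfl

/-- There is no finitary, sound and strongly complete consequence relation for
HXPath= over the class of tree models. -/
theorem no_finitary_strongly_complete_over_trees
    (pr : Set (NExp ℕ ℕ Unit Unit) → NExp ℕ ℕ Unit Unit → Prop)
    (hfin : ∀ Γ φ, pr Γ φ ↔ ∃ Γ' ⊆ Γ, Γ'.Finite ∧ pr Γ' φ)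
    (hsound : ∀ Γ φ, pr Γ φ → TreeConseq Γ φ)
    (hcomplete : ∀ Γ φ, TreeConseq Γ φ → pr Γ φ) :
    False := by
  have hbot := hcomplete _ _ ΓLin_unsat
  obtain ⟨Γ', hsub, hfinite, hpr⟩ := (hfin _ _).1 hbot
  have hcons := hsound _ _ hpr
  -- bound on the indices appearing in Γ'
  have hS : {n | Lin n ∈ Γ'}.Finite := hfinite.preimage Lin_inj.injOn
  obtain ⟨d, hd⟩ := hS.bddAbove
  have hbad := hcons (chainModel d) ((chainModel d).nom 0) (chainModel_isTree d) ?_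
  · exact hbad.2 hbad.1
  · intro ψ hψ
    rcases hsub hψ with h | ⟨n, rfl⟩
    · cases h; rfl
    · exact chainModel_sat_Lin d n (hd hψ)
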